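/- Proposition 1 (ℓ1 proximal step, matrix form): Given Y ∈ ℝ^{M×N} and z ∈ ℝ^N with z ≠ 0, the unique minimizer of f(X) = ‖Xz‖₁ + (1/2)‖X−Y‖_F² is X̂ = Y − S_z(Yz)z', where z := ‖z‖₂² and S_z is applied entrywise with S_z(x) := sign(x)·min(|x|/z, 1). -/

import Mathlib

open Matrix Finset

lemma sign_mul_abs' (b : ℝ) : Real.sign b * |b| = b := by
  rcases lt_trichotomy b 0 with h | h | h
  · rw [Real.sign_of_neg h, abs_of_neg h]; ring
  · simp [h]
  · rw [Real.sign_of_pos h, abs_of_pos h]; ring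

lemma scalar_key (zn b t : ℝ) (hzn : 0 < zn)
    (ht : t ≠ -(Real.sign b * min (|b| / zn) 1 * zn)) :
    |b - Real.sign b * min (|b| / zn) 1 * zn| +
      (Real.sign b * min (|b| / zn) 1) ^ 2 * zn / 2 < |b + t| + t ^ 2 / (2 * zn) := by
  set s := Real.sign b * min (|b| / zn) 1 with hs
  rcases le_or_gt (|b|) zn with hb | hb
  · have hmin : min (|b| / zn) 1 = |b| / zn := min_eq_left (by rw [div_le_one hzn]; exact hb)
    have hsv : s * zn = b := by
      rw [hs, hmin]
      field_simp
      rw [mul_comm] at *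
      nlinarith [sign_mul_abs' b]
    have hu : b + t ≠ 0 := by
      intro h; apply ht; rw [hsv]; linarith
    have h1 : (b + t) * b ≤ |b + t| * |b| := by
      calc (b + t) * b ≤ |(b + t) * b| := le_abs_self _
        _ = |b + t| * |b| := abs_mul _ _
    have h2 : 0 < |b + t| := abs_pos.mpr hu
    have hlhs : |b - s * zn| + s ^ 2 * zn / 2 = b ^ 2 / (2 * zn) := by
      rw [hsv]
      have : s = b / zn := by field_simp at hsv ⊢; linarith
      rw [this]; field_simp; simp
    rw [hlhs]
    have key : b ^ 2 / (2 * zn) +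
        (|b + t| * (2 * zn) + t ^ 2 - b ^ 2) / (2 * zn) = |b + t| + t ^ 2 / (2 * zn) := by
      field_simp; try ring
    rw [← key]
    have hpos : 0 < |b + t| * (2 * zn) + t ^ 2 - b ^ 2 := by
      nlinarith [sq_abs (b + t), sq_abs b, abs_nonneg b, h2.le]
    have := div_pos hpos (by linarith : (0:ℝ) < 2 * zn)
    linarith
  · have hmin : min (|b| / zn) 1 = 1 := min_eq_right (by rw [le_div_iff₀ hzn]; linarith)
    rcases lt_trichotomy b 0 with hbneg | hb0 | hbpos
    · have hss : s = -1 := by rw [hs, hmin, Real.sign_of_neg hbneg]; ring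
      rw [hss] at ht ⊢
      have habs : |b| = -b := abs_of_neg hbneg
      rw [habs] at hb
      have hlhs : |b - (-1) * zn| = -b - zn := by
        rw [show b - (-1) * zn = b + zn by ring, abs_of_neg (by linarith)]; ring
      rw [hlhs]
      have ht' : t ≠ zn := by intro h; apply ht; rw [h]; ring
      have key : (-b - zn + (-1 : ℝ) ^ 2 * zn / 2) +
          ((t - zn) ^ 2 + 2 * zn * (|b + t| + (b + t))) / (2 * zn) =
          |b + t| + t ^ 2 / (2 * zn) := by field_simp; try ring
      rw [← key]
      have hpos : 0 < (t - zn) ^ 2 + 2 * zn * (|b + t| + (b + t)) := by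
        have h1 : 0 ≤ |b + t| + (b + t) := by
          have := neg_abs_le (b + t); linarith
        have h2 : 0 < (t - zn) ^ 2 := by
          have hne : t - zn ≠ 0 := sub_ne_zero.mpr ht'
          positivity
        nlinarith
      have := div_pos hpos (by linarith : (0:ℝ) < 2 * zn)
      linarith
    · exfalso; rw [hb0] at hb; simp at hb; linarith
    · have hss : s = 1 := by rw [hs, hmin, Real.sign_of_pos hbpos]; ring
      rw [hss] at ht ⊢
      have habs : |b| = b := abs_of_pos hbpos
      rw [habs] at hb
      have hlhs : |b - 1 * zn| = b - zn := by
        rw [abs_of_pos (by linarith)]; ring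
      rw [hlhs]
      have key : (b - zn + (1 : ℝ) ^ 2 * zn / 2) +
          ((t + zn) ^ 2 + 2 * zn * (|b + t| - (b + t))) / (2 * zn) =
          |b + t| + t ^ 2 / (2 * zn) := by field_simp; try ring
      rw [← key]
      have hpos : 0 < (t + zn) ^ 2 + 2 * zn * (|b + t| - (b + t)) := by
        have h1 : 0 ≤ |b + t| - (b + t) := by
          have := le_abs_self (b + t); linarith
        have h2 : 0 < (t + zn) ^ 2 := by
          have hne : t + zn ≠ 0 := by intro h; apply ht; linarith
          positivity
        nlinarith
      have := div_pos hpos (by linarith : (0:ℝ) < 2 * zn)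
      linarith

lemma scalar_key_le (zn b t : ℝ) (hzn : 0 < zn) :
    |b - Real.sign b * min (|b| / zn) 1 * zn| +
      (Real.sign b * min (|b| / zn) 1) ^ 2 * zn / 2 ≤ |b + t| + t ^ 2 / (2 * zn) := by
  by_cases ht : t = -(Real.sign b * min (|b| / zn) 1 * zn)
  · subst ht
    have h1 : b + -(Real.sign b * min (|b| / zn) 1 * zn) =
        b - Real.sign b * min (|b| / zn) 1 * zn := by ring
    rw [h1]
    have h2 : (-(Real.sign b * min (|b| / zn) 1 * zn)) ^ 2 / (2 * zn) =
        (Real.sign b * min (|b| / zn) 1) ^ 2 * zn / 2 := by field_simp; try ring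
    rw [h2]
  · exact (scalar_key zn b t hzn ht).le

lemma row_main {N : ℕ} (z y x : Fin N → ℝ) (hzn : 0 < ∑ j, z j ^ 2) :
    (|(∑ j, y j * z j) - Real.sign (∑ j, y j * z j) *
        min (|∑ j, y j * z j| / ∑ j, z j ^ 2) 1 * ∑ j, z j ^ 2| +
      (Real.sign (∑ j, y j * z j) * min (|∑ j, y j * z j| / ∑ j, z j ^ 2) 1) ^ 2 *
        (∑ j, z j ^ 2) / 2 ≤ |∑ j, x j * z j| + (1 / 2) * ∑ j, (x j - y j) ^ 2) ∧
    (x ≠ (fun j => y j - Real.sign (∑ j, y j * z j) *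
        min (|∑ j, y j * z j| / ∑ j, z j ^ 2) 1 * z j) →
      |(∑ j, y j * z j) - Real.sign (∑ j, y j * z j) *
        min (|∑ j, y j * z j| / ∑ j, z j ^ 2) 1 * ∑ j, z j ^ 2| +
      (Real.sign (∑ j, y j * z j) * min (|∑ j, y j * z j| / ∑ j, z j ^ 2) 1) ^ 2 *
        (∑ j, z j ^ 2) / 2 < |∑ j, x j * z j| + (1 / 2) * ∑ j, (x j - y j) ^ 2) := by
  set zn := ∑ j, z j ^ 2 with hzndef
  set b := ∑ j, y j * z j with hbdef
  set s := Real.sign b * min (|b| / zn) 1 with hsdef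
  set t := ∑ j, (x j - y j) * z j with htdef
  have hxz : ∑ j, x j * z j = b + t := by
    rw [hbdef, htdef, ← Finset.sum_add_distrib]
    congr 1; funext j; ring
  have expand : ∑ j, ((x j - y j) - t / zn * z j) ^ 2 =
      (∑ j, (x j - y j) ^ 2) - t ^ 2 / zn := by
    have e : ∀ j, ((x j - y j) - t / zn * z j) ^ 2 =
        (x j - y j) ^ 2 - 2 * (t / zn) * ((x j - y j) * z j) + (t / zn) ^ 2 * z j ^ 2 := by
      intro j; ring
    rw [Finset.sum_congr rfl (fun j _ => e j)]
    rw [Finset.sum_add_distrib, Finset.sum_sub_distrib, ← Finset.mul_sum, ← Finset.mul_sum,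
      ← htdef, ← hzndef]
    field_simp
    ring
  have cs : t ^ 2 / zn ≤ ∑ j, (x j - y j) ^ 2 := by
    have h0 : 0 ≤ ∑ j, ((x j - y j) - t / zn * z j) ^ 2 :=
      Finset.sum_nonneg fun j _ => sq_nonneg _
    linarith [expand ▸ h0]
  have hle : |b - s * zn| + s ^ 2 * zn / 2 ≤ |∑ j, x j * z j| + (1 / 2) * ∑ j, (x j - y j) ^ 2 := by
    rw [hxz]
    have hsc := scalar_key_le zn b t hzn
    rw [← hsdef] at hsc
    have h2 : t ^ 2 / (2 * zn) ≤ (1 / 2) * ∑ j, (x j - y j) ^ 2 := by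
      have : t ^ 2 / (2 * zn) = (1 / 2) * (t ^ 2 / zn) := by field_simp
      rw [this]; linarith
    linarith
  refine ⟨hle, fun hx => ?_⟩
  by_cases ht : t = -(s * zn)
  · -- CS must be strict
    have hne : ∃ j, (x j - y j) - t / zn * z j ≠ 0 := by
      by_contra h
      push_neg at h
      apply hx
      funext j
      have := h j
      have htz : t / zn = -s := by rw [ht]; field_simp
      rw [htz] at this
      nlinarith [this]
    obtain ⟨j0, hj0⟩ := hne
    have hstrict : t ^ 2 / zn < ∑ j, (x j - y j) ^ 2 := by
      have h0 : 0 < ∑ j, ((x j - y j) - t / zn * z j) ^ 2 :=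
        Finset.sum_pos' (fun j _ => sq_nonneg _)
          ⟨j0, Finset.mem_univ _, by positivity⟩
      linarith [expand ▸ h0]
    rw [hxz]
    have hsc := scalar_key_le zn b t hzn
    rw [← hsdef] at hsc
    have h2 : t ^ 2 / (2 * zn) < (1 / 2) * ∑ j, (x j - y j) ^ 2 := by
      have he : t ^ 2 / (2 * zn) = (1 / 2) * (t ^ 2 / zn) := by field_simp
      rw [he]; linarith
    linarith
  · rw [hxz]
    have h1 := scalar_key zn b t hzn ht
    rw [← hsdef] at h1
    have h2 : t ^ 2 / (2 * zn) ≤ (1 / 2) * ∑ j, (x j - y j) ^ 2 := by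
      have : t ^ 2 / (2 * zn) = (1 / 2) * (t ^ 2 / zn) := by field_simp
      rw [this]; linarith
    linarith

theorem prop1_ell1_prox_matrix {M N : ℕ}
    (Y : Matrix (Fin M) (Fin N) ℝ) (z : Fin N → ℝ) (hz : z ≠ 0) :
    let zn : ℝ := ∑ j, z j ^ 2
    let Sz : ℝ → ℝ := fun x => Real.sign x * min (|x| / zn) 1
    let Xhat : Matrix (Fin M) (Fin N) ℝ :=
      Y - Matrix.of (fun i j => Sz (Y.mulVec z i) * z j)
    ∀ X : Matrix (Fin M) (Fin N) ℝ, X ≠ Xhat →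
      (∑ i, |Xhat.mulVec z i|) + (1 / 2) * (∑ i, ∑ j, (Xhat i j - Y i j) ^ 2) <
        (∑ i, |X.mulVec z i|) + (1 / 2) * (∑ i, ∑ j, (X i j - Y i j) ^ 2) := by
  intro zn Sz Xhat X hX
  have hznv : zn = ∑ j, z j ^ 2 := rfl
  have hSz : ∀ x, Sz x = Real.sign x * min (|x| / zn) 1 := fun _ => rfl
  have hzn : 0 < zn := by
    obtain ⟨j, hj⟩ := Function.ne_iff.mp hz
    rw [hznv]
    have hj' : z j ≠ 0 := hj
    exact Finset.sum_pos' (fun j _ => sq_nonneg _) ⟨j, Finset.mem_univ _, by positivity⟩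
  have hmv : ∀ (W : Matrix (Fin M) (Fin N) ℝ) i, W.mulVec z i = ∑ j, W i j * z j := by
    intro W i; simp [Matrix.mulVec, dotProduct]
  have hXhatv : ∀ i j, Xhat i j = Y i j - Sz (∑ j, Y i j * z j) * z j := by
    intro i j
    show Y i j - Sz (Y.mulVec z i) * z j = _
    rw [hmv]
  have hA : ∀ i, |Xhat.mulVec z i| =
      |(∑ j, Y i j * z j) - Sz (∑ j, Y i j * z j) * zn| := by
    intro i
    congr 1
    rw [hmv]
    rw [Finset.sum_congr rfl (fun j _ => by
      rw [hXhatv i j]; ring : ∀ j ∈ Finset.univ, Xhat i j * z j =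
        Y i j * z j - Sz (∑ j, Y i j * z j) * z j ^ 2)]
    rw [Finset.sum_sub_distrib, ← Finset.mul_sum, hznv]
  have hB : ∀ i, ∑ j, (Xhat i j - Y i j) ^ 2 = Sz (∑ j, Y i j * z j) ^ 2 * zn := by
    intro i
    rw [Finset.sum_congr rfl (fun j _ => by
      rw [hXhatv i j]; ring : ∀ j ∈ Finset.univ, (Xhat i j - Y i j) ^ 2 =
        Sz (∑ j, Y i j * z j) ^ 2 * z j ^ 2)]
    rw [← Finset.mul_sum, hznv]
  simp only [hA, hB]
  simp only [hmv]
  rw [Finset.mul_sum, Finset.mul_sum, ← Finset.sum_add_distrib, ← Finset.sum_add_distrib]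
  have hzn' : 0 < ∑ j, z j ^ 2 := hznv ▸ hzn
  obtain ⟨i0, hi0⟩ := Function.ne_iff.mp hX
  refine Finset.sum_lt_sum (fun i _ => ?_) ⟨i0, Finset.mem_univ _, ?_⟩
  · have h1 := (row_main z (Y i) (X i) hzn').1
    rw [hSz, hznv]
    linarith
  · have hx : X i0 ≠ (fun j => Y i0 j - Real.sign (∑ j, Y i0 j * z j) *
        min (|∑ j, Y i0 j * z j| / ∑ j, z j ^ 2) 1 * z j) := by
      intro h
      apply hi0
      funext j
      rw [h, hXhatv i0 j, hSz, hznv]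
    have h1 := (row_main z (Y i0) (X i0) hzn').2 hx
    rw [hSz, hznv]
    linarith
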